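/- Let $n \ge 2$ and $\eta \in \mathbb{Z}_2^n$ with $|\eta| \equiv 3 \pmod 4$. Let $A$ be the adjacency matrix of the augmented hypercube $Q_n^\eta$ and let $\psi_t = \exp(-itA)\delta_{0_n}$. Then at time $t = \pi/4$, for every vertex $a \in \mathbb{Z}_2^n$ one has $|\psi_{\pi/4}(a)|^2 = 2^{-n+1}$ if $a \cdot \eta = 0$ and $|\psi_{\pi/4}(a)|^2 = 0$ if $a \cdot \eta = 1$; i.e. the distribution is uniform on the half of the vertices orthogonal to $\eta$ and zero on the other half. -/

import Mathlib

open Matrix Complex Finset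

/-- Hamming weight of a vector in `(ZMod 2)^n`. -/
def wt {n : ℕ} (x : Fin n → ZMod 2) : ℕ := (Finset.univ.filter fun i => x i = 1).card

/-- Inner product modulo 2. -/
def dot {n : ℕ} (a x : Fin n → ZMod 2) : ZMod 2 := ∑ i, a i * x i

/-- Adjacency matrix of the augmented hypercube `Q_n^η`:
`A[x,y] = 1` iff `x ⊕ y` is a standard unit vector or equals `η`. -/
def adjQeta {n : ℕ} (η : Fin n → ZMod 2) :
    Matrix (Fin n → ZMod 2) (Fin n → ZMod 2) ℂ :=
  Matrix.of fun x y =>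
    if (∃ j : Fin n, x + y = Pi.single j 1) ∨ x + y = η then 1 else 0

/-- Continuous-time quantum walk `ψ_t = exp(-itA) ψ₀`. -/
noncomputable def walk {V : Type*} [Fintype V] [DecidableEq V]
    (A : Matrix V V ℂ) (ψ0 : V → ℂ) (t : ℝ) : V → ℂ :=
  ((NormedSpace.expSeries ℂ (Matrix V V ℂ)).sum ((-(t : ℂ) * Complex.I) • A)).mulVec ψ0

noncomputable section AuxQW

/-- sign character -/
def chi (s : ZMod 2) : ℂ := if s = 0 then 1 else -1

/-- fourth-root character -/
def gq (s : ZMod 2) : ℂ := if s = 0 then 1 else Complex.I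

def ipw {n : ℕ} (x : Fin n → ZMod 2) : ℂ := ∏ j, gq (x j)

lemma chi_add (s t : ZMod 2) : chi (s + t) = chi s * chi t := by
  rcases (show ∀ s : ZMod 2, s = 0 ∨ s = 1 by decide) s with rfl | rfl <;> rcases (show ∀ s : ZMod 2, s = 0 ∨ s = 1 by decide) t with rfl | rfl <;> simp [chi, show (1+1:ZMod 2)=0 from rfl]

lemma chi_zero : chi 0 = 1 := rfl

lemma chi_mul_self (s : ZMod 2) : chi s * chi s = 1 := by
  rcases (show ∀ s : ZMod 2, s = 0 ∨ s = 1 by decide) s with rfl | rfl <;> simp [chi]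

lemma chi_conj (s : ZMod 2) : (starRingEnd ℂ) (chi s) = chi s := by
  rcases (show ∀ s : ZMod 2, s = 0 ∨ s = 1 by decide) s with rfl | rfl <;> simp [chi]

lemma gq_mul_conj (s : ZMod 2) : gq s * (starRingEnd ℂ) (gq s) = 1 := by
  rcases (show ∀ s : ZMod 2, s = 0 ∨ s = 1 by decide) s with rfl | rfl <;> simp [gq]

lemma gq_add (s t : ZMod 2) : gq (s + t) = gq s * gq t * chi (s * t) := by
  rcases (show ∀ s : ZMod 2, s = 0 ∨ s = 1 by decide) s with rfl | rfl <;> rcases (show ∀ s : ZMod 2, s = 0 ∨ s = 1 by decide) t with rfl | rfl <;> simp [gq, chi, Complex.I_mul_I, show (1+1:ZMod 2)=0 from rfl, show (1*1:ZMod 2)=1 from rfl]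

lemma addSelf {n : ℕ} (x : Fin n → ZMod 2) : x + x = 0 := by
  funext i
  have : ∀ a : ZMod 2, a + a = 0 := by decide
  exact this _

lemma add_eq_iff' {n : ℕ} (x y v : Fin n → ZMod 2) : x + y = v ↔ y = x + v := by
  constructor
  · rintro rfl; rw [← add_assoc, addSelf, zero_add]
  · rintro rfl; rw [← add_assoc, addSelf, zero_add]

lemma dot_add_left {n : ℕ} (a b x : Fin n → ZMod 2) :
    dot (a + b) x = dot a x + dot b x := by
  simp [dot, add_mul, Finset.sum_add_distrib]

lemma dot_add_right {n : ℕ} (a x y : Fin n → ZMod 2) :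
    dot a (x + y) = dot a x + dot a y := by
  simp [dot, mul_add, Finset.sum_add_distrib]

lemma dot_comm {n : ℕ} (a b : Fin n → ZMod 2) : dot a b = dot b a := by
  simp [dot, mul_comm]

lemma dot_zero_right {n : ℕ} (a : Fin n → ZMod 2) : dot a (0 : Fin n → ZMod 2) = 0 := by
  simp [dot]

lemma dot_single {n : ℕ} (a : Fin n → ZMod 2) (j : Fin n) :
    dot a (Pi.single j 1) = a j := by
  rw [dot, Finset.sum_eq_single j]
  · simp
  · intro i _ hij; simp [Pi.single_eq_of_ne hij]
  · simp

lemma chi_sum {ι : Type*} (s : Finset ι) (f : ι → ZMod 2) :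
    chi (∑ i ∈ s, f i) = ∏ i ∈ s, chi (f i) := by
  classical
  induction s using Finset.induction_on with
  | empty => simp [chi]
  | insert a s' h ih => simp [Finset.sum_insert h, Finset.prod_insert h, chi_add, ih]


lemma ipw_add {n : ℕ} (x y : Fin n → ZMod 2) :
    ipw (x + y) = ipw x * ipw y * chi (dot x y) := by
  rw [ipw, dot, chi_sum]
  simp only [Pi.add_apply, gq_add]
  rw [Finset.prod_mul_distrib, Finset.prod_mul_distrib]
  rfl

lemma ipw_mul_conj {n : ℕ} (x : Fin n → ZMod 2) :
    ipw x * (starRingEnd ℂ) (ipw x) = 1 := by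
  rw [ipw, map_prod, ← Finset.prod_mul_distrib]
  exact Finset.prod_eq_one fun j _ => gq_mul_conj _

lemma sum_chi {n : ℕ} (c : Fin n → ZMod 2) :
    ∑ b : Fin n → ZMod 2, chi (dot c b) = if c = 0 then (2 : ℂ) ^ n else 0 := by
  by_cases hc : c = 0
  · simp [hc, dot_comm, dot_zero_right, chi_zero, Finset.card_univ]
  · simp only [hc, if_false]
    obtain ⟨i, hi⟩ : ∃ i, c i ≠ 0 := by
      by_contra h
      push_neg at h
      exact hc (funext h)
    have hci : c i = 1 := by
      have h1 : ∀ a : ZMod 2, a ≠ 0 → a = 1 := by decide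
      exact h1 _ hi
    have hrei : ∑ b : Fin n → ZMod 2, chi (dot c b)
        = ∑ b : Fin n → ZMod 2, chi (dot c (Pi.single i 1 + b)) :=
      (Fintype.sum_equiv (Equiv.addLeft (Pi.single i 1)) _ _ (fun b => rfl)).symm
    have hs : ∑ b : Fin n → ZMod 2, chi (dot c b)
        = -∑ b : Fin n → ZMod 2, chi (dot c b) := by
      nth_rewrite 1 [hrei]
      rw [← Finset.sum_neg_distrib]
      refine Finset.sum_congr rfl fun b _ => ?_
      rw [dot_add_right, chi_add, dot_single, hci]
      have hc1 : chi 1 = -1 := by simp [chi]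
      rw [hc1]
      ring
    have h2 : (2:ℂ) * ∑ b : Fin n → ZMod 2, chi (dot c b) = 0 := by linear_combination hs
    exact (mul_eq_zero.mp h2).resolve_left two_ne_zero

/-- the Fourier-type sum -/
def Tq {n : ℕ} (a : Fin n → ZMod 2) : ℂ :=
  ∑ b : Fin n → ZMod 2, chi (dot a b) * ipw b

lemma Tq_key {n : ℕ} (a c : Fin n → ZMod 2) :
    Tq (a + c) * (starRingEnd ℂ) (Tq a)
      = 2 ^ n * chi (dot a c) * (starRingEnd ℂ) (ipw c) := by
  rw [Tq, Tq, map_sum, Finset.sum_mul_sum]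
  have hin : ∀ b : Fin n → ZMod 2,
      ∑ b' : Fin n → ZMod 2, chi (dot (a + c) b) * ipw b *
        (starRingEnd ℂ) (chi (dot a b') * ipw b')
      = ∑ d : Fin n → ZMod 2, chi (dot (a + c) b) * ipw b *
        (starRingEnd ℂ) (chi (dot a (b + d)) * ipw (b + d)) :=
    fun b => (Fintype.sum_equiv (Equiv.addLeft b) _ _ (fun d => rfl)).symm
  rw [Finset.sum_congr rfl fun b _ => hin b, Finset.sum_comm]
  have hterm : ∀ d b : Fin n → ZMod 2,
      chi (dot (a + c) b) * ipw b * (starRingEnd ℂ) (chi (dot a (b + d)) * ipw (b + d))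
      = (chi (dot a d) * (starRingEnd ℂ) (ipw d)) * chi (dot (c + d) b) := by
    intro d b
    rw [dot_add_left, dot_add_right, ipw_add, dot_add_left]
    rw [chi_add, chi_add, chi_add]
    simp only [_root_.map_mul, chi_conj]
    have h1 : chi (dot a b) * chi (dot a b) = 1 := chi_mul_self _
    have h2 : ipw b * (starRingEnd ℂ) (ipw b) = 1 := ipw_mul_conj b
    have h3 : chi (dot b d) = chi (dot d b) := by rw [dot_comm]
    calc chi (dot a b) * chi (dot c b) * ipw b *
          (chi (dot a b) * chi (dot a d) * ((starRingEnd ℂ) (ipw b) *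
            (starRingEnd ℂ) (ipw d) * chi (dot b d)))
        = (chi (dot a b) * chi (dot a b)) * (ipw b * (starRingEnd ℂ) (ipw b)) *
          (chi (dot a d) * (starRingEnd ℂ) (ipw d)) * (chi (dot c b) * chi (dot d b)) := by
          rw [h3]; ring
      _ = (chi (dot a d) * (starRingEnd ℂ) (ipw d)) * (chi (dot c b) * chi (dot d b)) := by
          rw [h1, h2]; ring
  have hsum : ∀ d : Fin n → ZMod 2,
      ∑ b : Fin n → ZMod 2, chi (dot (a + c) b) * ipw b *
        (starRingEnd ℂ) (chi (dot a (b + d)) * ipw (b + d))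
      = (chi (dot a d) * (starRingEnd ℂ) (ipw d)) * (if c + d = 0 then (2:ℂ)^n else 0) := by
    intro d
    rw [Finset.sum_congr rfl fun b _ => hterm d b, ← Finset.mul_sum, sum_chi]
  rw [Finset.sum_congr rfl fun d _ => hsum d]
  rw [Finset.sum_eq_single c]
  · rw [addSelf]
    simp only [if_true, eq_self_iff_true]
    ring
  · intro d _ hd
    have hne : c + d ≠ 0 := by
      intro h
      apply hd
      have h2 := congrArg (fun z => c + z) h
      simp only [← add_assoc, addSelf, zero_add, add_zero] at h2
      exact h2
    simp [hne]
  · simp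

noncomputable def Hm (n : ℕ) : Matrix (Fin n → ZMod 2) (Fin n → ZMod 2) ℂ :=
  Matrix.of fun x y => chi (dot x y)

def Pm {n : ℕ} (v : Fin n → ZMod 2) : Matrix (Fin n → ZMod 2) (Fin n → ZMod 2) ℂ :=
  Matrix.of fun x y => if x + y = v then 1 else 0

noncomputable def lamv {n : ℕ} (η : Fin n → ZMod 2) (b : Fin n → ZMod 2) : ℂ :=
  (∑ j, chi (b j)) + chi (dot b η)

lemma dot_single_left {n : ℕ} (b : Fin n → ZMod 2) (j : Fin n) :
    dot (Pi.single j 1) b = b j := by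
  rw [dot_comm, dot_single]

lemma Pm_mul_Hm {n : ℕ} (v : Fin n → ZMod 2) :
    Pm v * Hm n = Hm n * Matrix.diagonal (fun b => chi (dot v b)) := by
  ext x b
  rw [Matrix.mul_apply, Matrix.mul_diagonal]
  simp only [Pm, Hm, Matrix.of_apply]
  simp_rw [add_eq_iff', ite_mul, one_mul, zero_mul]
  rw [Fintype.sum_ite_eq' (x + v) (fun y => chi (dot y b))]
  rw [dot_add_left, chi_add]

lemma Hm_mul_Hm (n : ℕ) :
    Hm n * Hm n = ((2:ℂ) ^ n) • (1 : Matrix (Fin n → ZMod 2) (Fin n → ZMod 2) ℂ) := by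
  ext x y
  rw [Matrix.mul_apply, Matrix.smul_apply, Matrix.one_apply]
  simp only [Hm, Matrix.of_apply]
  have h1 : ∑ b : Fin n → ZMod 2, chi (dot x b) * chi (dot b y)
      = ∑ b : Fin n → ZMod 2, chi (dot (x + y) b) :=
    Finset.sum_congr rfl fun b _ => by rw [dot_comm b y, dot_add_left, chi_add]
  rw [h1, sum_chi]
  have h2 : x + y = 0 ↔ x = y := by
    rw [add_eq_iff', add_zero, eq_comm]
  by_cases h : x = y
  · rw [if_pos (h2.mpr h), if_pos h]
    simp
  · rw [if_neg (fun hh => h (h2.mp hh)), if_neg h]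
    simp

lemma Hm_inv_eq (n : ℕ) : (Hm n)⁻¹ = ((2:ℂ)^n)⁻¹ • Hm n :=
  Matrix.inv_eq_right_inv (by
    rw [Matrix.mul_smul, Hm_mul_Hm, smul_smul,
      inv_mul_cancel₀ (pow_ne_zero _ (two_ne_zero)), one_smul])

lemma Hm_isUnit (n : ℕ) : IsUnit (Hm n) := by
  have h : Hm n * (((2:ℂ)^n)⁻¹ • Hm n) = 1 := by
    rw [Matrix.mul_smul, Hm_mul_Hm, smul_smul,
      inv_mul_cancel₀ (pow_ne_zero _ (two_ne_zero)), one_smul]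
  exact @isUnit_of_invertible _ _ _ (invertibleOfRightInverse _ _ h)

lemma wt_single {n : ℕ} (j : Fin n) : wt (Pi.single j (1 : ZMod 2)) = 1 := by
  have hset : (Finset.univ.filter fun i => (Pi.single j 1 : Fin n → ZMod 2) i = 1) = {j} := by
    ext i
    simp only [Finset.mem_filter, Finset.mem_univ, true_and, Finset.mem_singleton]
    rcases eq_or_ne i j with h|h
    · subst h; simp
    · simp only [Pi.single_eq_of_ne h, h, iff_false]
      decide
  rw [wt, hset, Finset.card_singleton]

lemma single_inj {n : ℕ} {j j' : Fin n}
    (h : (Pi.single j 1 : Fin n → ZMod 2) = Pi.single j' 1) :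
    j = j' := by
  by_contra hne
  have h2 := congrFun h j
  rw [Pi.single_eq_same, Pi.single_eq_of_ne hne] at h2
  exact one_ne_zero h2

lemma adj_eq {n : ℕ} (η : Fin n → ZMod 2) (hη1 : wt η % 4 = 3) :
    adjQeta η = (∑ j : Fin n, Pm (Pi.single j 1)) + Pm η := by
  have hηe : ∀ j : Fin n, η ≠ Pi.single j 1 := by
    intro j h
    rw [h, wt_single] at hη1
    norm_num at hη1
  ext x y
  simp only [adjQeta, Matrix.of_apply, Matrix.add_apply, Matrix.sum_apply, Pm]
  by_cases hex : ∃ j : Fin n, x + y = Pi.single j 1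
  · obtain ⟨j0, hj0⟩ := hex
    have hsne : x + y ≠ η := fun h => hηe j0 (by rw [← h, hj0])
    have hsum : ∑ j : Fin n, (if x + y = Pi.single j 1 then (1:ℂ) else 0) = 1 := by
      rw [Finset.sum_eq_single j0]
      · simp [hj0]
      · intro j _ hj
        have hne : x + y ≠ Pi.single j 1 := fun h => hj (single_inj (h.symm.trans hj0))
        simp [hne]
      · simp
    rw [if_pos (Or.inl ⟨j0, hj0⟩), hsum, if_neg hsne]
    ring
  · have hsum0 : ∑ j : Fin n, (if x + y = Pi.single j 1 then (1:ℂ) else 0) = 0 :=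
      Finset.sum_eq_zero fun j _ => by
        have : x + y ≠ Pi.single j 1 := fun h => hex ⟨j, h⟩
        simp [this]
    by_cases hsη : x + y = η
    · rw [if_pos (Or.inr hsη), hsum0, if_pos hsη]
      ring
    · rw [if_neg (not_or.mpr ⟨fun h => hex h, hsη⟩), hsum0, if_neg hsη]
      ring

lemma adj_mul_Hm {n : ℕ} (η : Fin n → ZMod 2) (hη1 : wt η % 4 = 3) :
    adjQeta η * Hm n = Hm n * Matrix.diagonal (lamv η) := by
  rw [adj_eq η hη1, Matrix.add_mul, Matrix.sum_mul]
  simp_rw [Pm_mul_Hm]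
  rw [← Finset.mul_sum, ← Matrix.mul_add]
  congr 1
  ext x y
  simp only [Matrix.add_apply, Matrix.sum_apply, Matrix.diagonal_apply, lamv]
  by_cases h : x = y
  · subst h
    simp only [if_pos rfl, if_true, eq_self_iff_true, ite_true]
    have hs : (∑ j : Fin n, chi (dot (Pi.single j 1) x)) = ∑ j : Fin n, chi (x j) :=
      Finset.sum_congr rfl fun j _ => by rw [dot_single_left]
    rw [hs, dot_comm]
  · simp [h]

lemma Hm_mul_inv (n : ℕ) : Hm n * (Hm n)⁻¹ = 1 := by
  rw [Hm_inv_eq, Matrix.mul_smul, Hm_mul_Hm, smul_smul,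
    inv_mul_cancel₀ (pow_ne_zero _ (two_ne_zero)), one_smul]

lemma walk_formula {n : ℕ} (η : Fin n → ZMod 2) (hη1 : wt η % 4 = 3) (t : ℝ)
    (a : Fin n → ZMod 2) :
    walk (adjQeta η) (Pi.single (0 : Fin n → ZMod 2) 1) t a
      = ((2:ℂ)^n)⁻¹ * ∑ b : Fin n → ZMod 2,
          chi (dot a b) * Complex.exp ((-(t:ℂ) * Complex.I) * lamv η b) := by
  have hU := Hm_isUnit n
  have hA : adjQeta η = Hm n * Matrix.diagonal (lamv η) * (Hm n)⁻¹ := by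
    rw [← adj_mul_Hm η hη1, Matrix.mul_assoc, Hm_mul_inv, Matrix.mul_one]
  have hsA : (-(t:ℂ) * Complex.I) • adjQeta η
      = Hm n * Matrix.diagonal (fun b => (-(t:ℂ) * Complex.I) * lamv η b) * (Hm n)⁻¹ := by
    rw [hA, ← Matrix.smul_mul, ← Matrix.mul_smul, ← Matrix.diagonal_smul]
    rfl
  have hexp : (NormedSpace.expSeries ℂ (Matrix (Fin n → ZMod 2) (Fin n → ZMod 2) ℂ)).sum ((-(t:ℂ) * Complex.I) • adjQeta η)
      = Hm n * Matrix.diagonal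
          (fun b => Complex.exp ((-(t:ℂ) * Complex.I) * lamv η b)) * (Hm n)⁻¹ := by
    rw [← NormedSpace.exp_eq_expSeries_sum ℂ, hsA, Matrix.exp_conj _ _ hU, Matrix.exp_diagonal]
    have hd : (NormedSpace.exp fun b : Fin n → ZMod 2 => (-(t:ℂ) * Complex.I) * lamv η b)
        = fun b : Fin n → ZMod 2 => Complex.exp ((-(t:ℂ) * Complex.I) * lamv η b) := by
      funext b
      rw [Complex.exp_eq_exp_ℂ]
      exact Pi.coe_exp (𝔸 := fun _ : Fin n → ZMod 2 => ℂ) _ b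
    rw [hd]
  rw [walk, hexp]
  simp only [Matrix.mulVec_single, mul_one, MulOpposite.op_one, one_smul, Matrix.col_apply]
  rw [Hm_inv_eq, Matrix.mul_smul, Matrix.smul_apply, Matrix.mul_apply, smul_eq_mul]
  congr 1
  refine Finset.sum_congr rfl fun b _ => ?_
  rw [Matrix.mul_diagonal]
  have h0 : Hm n b 0 = 1 := by
    show chi (dot b 0) = 1
    rw [dot_zero_right, chi_zero]
  rw [h0, mul_one]
  rfl

noncomputable def e0 : ℂ :=
  ((Real.sqrt 2 / 2 : ℝ) : ℂ) - ((Real.sqrt 2 / 2 : ℝ) : ℂ) * Complex.I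

lemma exp_pi4 : Complex.exp (((Real.pi/4 : ℝ):ℂ) * Complex.I)
    = ((Real.sqrt 2/2 : ℝ):ℂ) + ((Real.sqrt 2/2 : ℝ):ℂ) * Complex.I := by
  rw [Complex.exp_mul_I, ← Complex.ofReal_cos, ← Complex.ofReal_sin,
    Real.cos_pi_div_four, Real.sin_pi_div_four]

lemma exp_neg_pi4 : Complex.exp (-((Real.pi/4 : ℝ):ℂ) * Complex.I) = e0 := by
  have h : -((Real.pi/4 : ℝ):ℂ) * Complex.I = (((-(Real.pi/4) : ℝ)):ℂ) * Complex.I := by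
    push_cast; ring
  rw [h, Complex.exp_mul_I, ← Complex.ofReal_cos, ← Complex.ofReal_sin,
    Real.cos_neg, Real.sin_neg, Real.cos_pi_div_four, Real.sin_pi_div_four, e0]
  push_cast
  ring

lemma zmod2_cases : ∀ s : ZMod 2, s = 0 ∨ s = 1 := by decide

lemma exp_chi (s : ZMod 2) :
    Complex.exp ((-((Real.pi/4 : ℝ):ℂ) * Complex.I) * chi s) = e0 * gq s := by
  rcases zmod2_cases s with rfl | rfl
  · have : (-((Real.pi/4 : ℝ):ℂ) * Complex.I) * chi 0 = -((Real.pi/4 : ℝ):ℂ) * Complex.I := by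
      rw [chi_zero]; ring
    rw [this, exp_neg_pi4]
    simp [gq]
  · have hc : chi 1 = -1 := by simp [chi]
    have : (-((Real.pi/4 : ℝ):ℂ) * Complex.I) * chi 1 = ((Real.pi/4 : ℝ):ℂ) * Complex.I := by
      rw [hc]; ring
    rw [this, exp_pi4]
    have hg : gq 1 = Complex.I := by simp [gq]
    rw [hg, e0]
    linear_combination ((Real.sqrt 2/2 : ℝ):ℂ) * Complex.I_sq

lemma exp_chi' (s : ZMod 2) :
    Complex.exp ((-((Real.pi/4 : ℝ):ℂ) * Complex.I) * chi s)
      = ((Real.sqrt 2/2 : ℝ):ℂ) * (1 - Complex.I * chi s) := by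
  rw [exp_chi]
  rcases zmod2_cases s with rfl | rfl
  · have hg : gq 0 = 1 := by simp [gq]
    rw [chi_zero, hg, e0]
    ring
  · have hc : chi 1 = -1 := by simp [chi]
    have hg : gq 1 = Complex.I := by simp [gq]
    rw [hc, hg, e0]
    linear_combination (-((Real.sqrt 2/2 : ℝ):ℂ)) * Complex.I_sq

lemma exp_lamv {n : ℕ} (η b : Fin n → ZMod 2) :
    Complex.exp ((-((Real.pi/4 : ℝ):ℂ) * Complex.I) * lamv η b)
      = e0 ^ n * ipw b * (((Real.sqrt 2/2 : ℝ):ℂ) * (1 - Complex.I * chi (dot b η))) := by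
  rw [lamv, mul_add, Complex.exp_add, Finset.mul_sum, Complex.exp_sum]
  rw [Finset.prod_congr rfl fun j _ => exp_chi (b j)]
  rw [Finset.prod_mul_distrib, Finset.prod_const, Finset.card_univ, Fintype.card_fin]
  rw [exp_chi']
  rfl

lemma ipw_eta {n : ℕ} (η : Fin n → ZMod 2) (hη1 : wt η % 4 = 3) :
    ipw η = -Complex.I := by
  have hgq : ∀ s : ZMod 2, gq s = if s = 1 then Complex.I else 1 := by
    intro s; rcases (show ∀ s : ZMod 2, s = 0 ∨ s = 1 by decide) s with rfl | rfl <;> simp [gq]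
  have h1 : ipw η = Complex.I ^ wt η := by
    rw [ipw, wt, Finset.prod_congr rfl fun j _ => hgq (η j), Finset.prod_ite,
      Finset.prod_const, Finset.prod_const, one_pow, mul_one]
  obtain ⟨k, hk⟩ : ∃ k, wt η = 4*k + 3 := ⟨wt η / 4, by omega⟩
  have h4 : Complex.I ^ 4 = 1 := by
    rw [show (4:ℕ) = 2*2 from rfl, pow_mul, Complex.I_sq]
    norm_num
  have h3 : Complex.I ^ 3 = -Complex.I := by
    rw [pow_succ, Complex.I_sq]
    ring
  rw [h1, hk, pow_add, pow_mul, h4, one_pow, h3, one_mul]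

lemma ipw_zero {n : ℕ} : ipw (0 : Fin n → ZMod 2) = 1 := by
  rw [ipw]
  exact Finset.prod_eq_one fun j _ => by simp [gq]

lemma Tq_normSq {n : ℕ} (a : Fin n → ZMod 2) :
    Tq a * (starRingEnd ℂ) (Tq a) = (2:ℂ)^n := by
  have h := Tq_key a (0 : Fin n → ZMod 2)
  rw [add_zero, dot_zero_right, chi_zero, ipw_zero] at h
  simpa using h

lemma Tq_conj_ne {n : ℕ} (a : Fin n → ZMod 2) : (starRingEnd ℂ) (Tq a) ≠ 0 := by
  intro h0
  have h := Tq_normSq a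
  rw [h0, mul_zero] at h
  exact (pow_ne_zero n (two_ne_zero : (2:ℂ) ≠ 0)) h.symm

lemma Tq_shift {n : ℕ} (η : Fin n → ZMod 2) (hη1 : wt η % 4 = 3) (a : Fin n → ZMod 2) :
    Tq (a + η) = chi (dot a η) * Complex.I * Tq a := by
  have h := Tq_key a η
  rw [ipw_eta η hη1, map_neg, Complex.conj_I, neg_neg] at h
  have h2 : Tq (a + η) * (starRingEnd ℂ) (Tq a)
      = (chi (dot a η) * Complex.I * Tq a) * (starRingEnd ℂ) (Tq a) := by
    rw [h]
    have := Tq_normSq a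
    calc (2:ℂ)^n * chi (dot a η) * Complex.I
        = chi (dot a η) * Complex.I * ((2:ℂ)^n) := by ring
      _ = chi (dot a η) * Complex.I * (Tq a * (starRingEnd ℂ) (Tq a)) := by rw [this]
      _ = chi (dot a η) * Complex.I * Tq a * (starRingEnd ℂ) (Tq a) := by ring
  exact mul_right_cancel₀ (Tq_conj_ne a) h2

lemma walk_closed {n : ℕ} (η : Fin n → ZMod 2) (hη1 : wt η % 4 = 3)
    (a : Fin n → ZMod 2) :
    walk (adjQeta η) (Pi.single (0 : Fin n → ZMod 2) 1) (Real.pi/4) a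
      = ((2:ℂ)^n)⁻¹ * (e0 ^ n * ((Real.sqrt 2/2 : ℝ):ℂ))
          * ((1 + chi (dot a η)) * Tq a) := by
  rw [walk_formula η hη1]
  have hterm : ∀ b : Fin n → ZMod 2,
      chi (dot a b) * Complex.exp ((-((Real.pi/4:ℝ):ℂ) * Complex.I) * lamv η b)
      = (e0^n * ((Real.sqrt 2/2 : ℝ):ℂ))
          * (chi (dot a b) * ipw b - Complex.I * (chi (dot (a + η) b) * ipw b)) := by
    intro b
    rw [exp_lamv]
    have h1 : chi (dot (a+η) b) = chi (dot a b) * chi (dot b η) := by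
      rw [dot_add_left, chi_add, dot_comm η b]
    rw [h1]
    ring
  rw [Finset.sum_congr rfl fun b _ => hterm b, ← Finset.mul_sum, Finset.sum_sub_distrib,
    ← Finset.mul_sum]
  have hTa : (∑ b : Fin n → ZMod 2, chi (dot a b) * ipw b) = Tq a := rfl
  have hTaη : (∑ b : Fin n → ZMod 2, chi (dot (a + η) b) * ipw b) = Tq (a + η) := rfl
  rw [hTa, hTaη, Tq_shift η hη1]
  have hII : Complex.I * (chi (dot a η) * Complex.I * Tq a)
      = -(chi (dot a η) * Tq a) := by
    have : Complex.I * (chi (dot a η) * Complex.I * Tq a)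
        = (Complex.I * Complex.I) * (chi (dot a η) * Tq a) := by ring
    rw [this, Complex.I_mul_I]
    ring
  rw [hII]
  ring

lemma normSq_e0 : Complex.normSq e0 = 1 := by
  have h : e0 = ((Real.sqrt 2/2 : ℝ):ℂ) + ((-(Real.sqrt 2/2) : ℝ):ℂ) * Complex.I := by
    rw [e0]; push_cast; ring
  rw [h, Complex.normSq_add_mul_I]
  have h2 : Real.sqrt 2 ^ 2 = 2 := Real.sq_sqrt (by norm_num)
  nlinarith [h2]

lemma Tq_normSq' {n : ℕ} (a : Fin n → ZMod 2) : Complex.normSq (Tq a) = 2^n := by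
  have h := Tq_normSq a
  rw [Complex.mul_conj] at h
  exact_mod_cast h

end AuxQW

/-- If `|η| ≡ 3 (mod 4)`, then at time `π/4` the walk on `Q_n^η` started at
`0_n` is uniform on the half-space `{a : a·η = 0}` and zero on the rest. -/
theorem augmented_hypercube_half_mixing_three_mod_four (n : ℕ) (hn : 2 ≤ n)
    (η : Fin n → ZMod 2) (hη : wt η % 4 = 3) :
    ∀ a : Fin n → ZMod 2,
      (dot a η = 0 →
        ‖walk (adjQeta η) (Pi.single (0 : Fin n → ZMod 2) 1)
          (Real.pi / 4) a‖ ^ 2 = 1 / 2 ^ (n - 1)) ∧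
      (dot a η = 1 →
        ‖walk (adjQeta η) (Pi.single (0 : Fin n → ZMod 2) 1)
          (Real.pi / 4) a‖ ^ 2 = 0) := by
  intro a
  have hw := walk_closed η hη a
  constructor
  · intro h0
    rw [hw, h0, chi_zero, Complex.sq_norm]
    rw [show ((1:ℂ) + 1) = 2 by norm_num]
    simp only [_root_.map_mul, _root_.map_pow, map_inv₀]
    rw [normSq_e0, Tq_normSq', Complex.normSq_ofReal]
    have h2 : Complex.normSq 2 = 4 := by
      simp [Complex.normSq]; norm_num
    rw [h2]
    have hs2 : Real.sqrt 2 * Real.sqrt 2 = 2 := Real.mul_self_sqrt (by norm_num)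
    have hhalf : Real.sqrt 2/2 * (Real.sqrt 2/2) = 1/2 := by nlinarith [hs2]
    have h4 : (4:ℝ)^n = 2^n * 2^n := by
      rw [show (4:ℝ) = 2*2 by norm_num, mul_pow]
    have hpow : (2:ℝ)^n = 2^(n-1) * 2 := by
      conv_lhs => rw [show n = (n-1) + 1 by omega]
      rw [pow_succ]
    have hne1 : (2:ℝ)^(n-1) ≠ 0 := by positivity
    rw [one_pow, hhalf, h4, hpow]
    field_simp
    ring
  · intro h1
    have hc : chi 1 = -1 := by simp [chi]
    rw [hw, h1, hc]
    simp
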